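/- Let G be a locally compact second countable group, d ≥ 2 an integer, and let φ : G → ℂ be a nonzero continuous M_d-multiplier with a factorization (H₀, …, H_d; ξ₁, …, ξ_d) such that for every i = 1, …, d−1 the sets Aᵢ = {ξ_{i+1}(x_{i+1})⋯ξ_d(x_d)(1) : x_{i+1}, …, x_d ∈ G} and Bᵢ = {(ξ₁(x₁)⋯ξᵢ(xᵢ))*(1) : x₁, …, xᵢ ∈ G} are total in Hᵢ. Then each ξᵢ is continuous for the weak operator topology (i.e. for all v ∈ Hᵢ and w ∈ Hᵢ₋₁ the map x ↦ ⟨ξᵢ(x)v, w⟩ is continuous on G), and each Hᵢ is separable. -/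

import Mathlib

open ComplexConjugate Filter Topology
open scoped ComplexInnerProductSpace Pointwise

universe u

/-- A factorization of length `d` of a function `φ : G → ℂ` consists of complex Hilbert
spaces `H 0, …, H d` with `H 0 = H d = ℂ` (witnessed by the linear isometric isomorphisms
`e0`, `ed`) together with bounded maps `xi i : G → B(H (i+1), H i)` such that
`φ (x 1 * ⋯ * x d)` equals `xi 1 (x 1) ∘ ⋯ ∘ xi d (x d)` applied to `1 ∈ ℂ = H d`,
read in `H 0 = ℂ`. -/
structure Factorization (d : ℕ) (G : Type*) [Group G] (φ : G → ℂ) where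
  H : Fin (d + 1) → Type u
  [normed : ∀ i, NormedAddCommGroup (H i)]
  [ips : ∀ i, InnerProductSpace ℂ (H i)]
  [complete : ∀ i, CompleteSpace (H i)]
  e0 : H 0 ≃ₗᵢ[ℂ] ℂ
  ed : H (Fin.last d) ≃ₗᵢ[ℂ] ℂ
  xi : ∀ i : Fin d, G → (H i.succ →L[ℂ] H i.castSucc)
  bdd : ∀ i : Fin d, ∃ M : ℝ, ∀ x : G, ‖xi i x‖ ≤ M
  factor : ∀ x : Fin d → G,
    φ (List.ofFn x).prod =
      e0 (Fin.reverseInduction (motive := fun i => H i) (ed.symm 1)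
        (fun j v => xi j (x j) v) 0)

attribute [instance] Factorization.normed Factorization.ips Factorization.complete

namespace Factorization

variable {d : ℕ} {G : Type*} [Group G] {φ : G → ℂ}

/-- The constant of a factorization, `∏ i, sup_x ‖xi i x‖`. -/
noncomputable def const (F : Factorization d G φ) : ℝ :=
  ∏ i : Fin d, ⨆ x : G, ‖F.xi i x‖

/-- The partial right product `xi (i+1) (x (i+1)) ⋯ xi d (x d) (1) ∈ H i`. -/
noncomputable def rightVec (F : Factorization d G φ) (x : Fin d → G) (i : Fin (d + 1)) :
    F.H i :=
  Fin.reverseInduction (motive := fun i => F.H i) (F.ed.symm 1)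
    (fun j v => F.xi j (x j) v) i

/-- The partial left product `(xi 1 (x 1) ⋯ xi i (x i))^* (1) ∈ H i`. -/
noncomputable def leftVec (F : Factorization d G φ) (x : Fin d → G) (i : Fin (d + 1)) :
    F.H i :=
  Fin.induction (motive := fun i => F.H i) (F.e0.symm 1)
    (fun j w => ContinuousLinearMap.adjoint (F.xi j (x j)) w) i

end Factorization

/-- `φ` is an `M_d`-multiplier: a bounded continuous function admitting a factorization
of length `d`. -/
def IsMdMultiplier (d : ℕ) {G : Type*} [Group G] [TopologicalSpace G] (φ : G → ℂ) : Prop :=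
  Continuous φ ∧ (∃ M : ℝ, ∀ x : G, ‖φ x‖ ≤ M) ∧ Nonempty (Factorization.{0} d G φ)

/-- The `M_d`-multiplier norm `‖φ‖_{M_d}`: the infimum of the constants over all
factorizations of length `d` of `φ`. -/
noncomputable def MdNorm (d : ℕ) {G : Type*} [Group G] (φ : G → ℂ) : ℝ :=
  sInf {C : ℝ | ∃ F : Factorization.{0} d G φ, F.const = C}

/-- A chain of bounded linear maps `eta i : L¹(G, μ) → B(K (i+1), K i)` between complex
Hilbert spaces `K 0, …, K d` with `K 0 = K d = ℂ`. -/
structure L1Chain (d : ℕ) {G : Type*} [Group G] [MeasurableSpace G]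
    (μ : MeasureTheory.Measure G) where
  K : Fin (d + 1) → Type u
  [normed : ∀ i, NormedAddCommGroup (K i)]
  [ips : ∀ i, InnerProductSpace ℂ (K i)]
  [complete : ∀ i, CompleteSpace (K i)]
  e0 : K 0 ≃ₗᵢ[ℂ] ℂ
  ed : K (Fin.last d) ≃ₗᵢ[ℂ] ℂ
  eta : ∀ i : Fin d, MeasureTheory.Lp ℂ 1 μ →L[ℂ] (K i.succ →L[ℂ] K i.castSucc)

attribute [instance] L1Chain.normed L1Chain.ips L1Chain.complete

open MeasureTheory

/-- Convolution of two functions on a group: `(f ∗ g) x = ∫ f y * g (y⁻¹ * x) dμ y`. -/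
noncomputable def conv {G : Type*} [Group G] [MeasurableSpace G] (μ : Measure G)
    (f g : G → ℂ) : G → ℂ :=
  fun x => ∫ y, f y * g (y⁻¹ * x) ∂μ

/-- Iterated convolution of a (nonempty) list of functions. -/
noncomputable def convProd {G : Type*} [Group G] [MeasurableSpace G] (μ : Measure G) :
    List (G → ℂ) → (G → ℂ)
  | [] => fun _ => 0
  | [f] => f
  | f :: g :: l => conv μ f (convProd μ (g :: l))

namespace L1Chain

variable {d : ℕ} {G : Type*} [Group G] [MeasurableSpace G] {μ : Measure G}

/-- The constant `∏ i, ‖eta i‖` of a chain. -/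
noncomputable def const (E : L1Chain d μ) : ℝ :=
  ∏ i : Fin d, ‖E.eta i‖

/-- The partial right product `eta (i+1) (f (i+1)) ⋯ eta d (f d) (1) ∈ K i`. -/
noncomputable def rightVec (E : L1Chain d μ) (f : Fin d → Lp ℂ 1 μ) (i : Fin (d + 1)) :
    E.K i :=
  Fin.reverseInduction (motive := fun i => E.K i) (E.ed.symm 1)
    (fun j v => E.eta j (f j) v) i

/-- The partial left product `(eta 1 (f 1) ⋯ eta i (f i))^* (1) ∈ K i`. -/
noncomputable def leftVec (E : L1Chain d μ) (f : Fin d → Lp ℂ 1 μ) (i : Fin (d + 1)) :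
    E.K i :=
  Fin.induction (motive := fun i => E.K i) (E.e0.symm 1)
    (fun j w => ContinuousLinearMap.adjoint (E.eta j (f j)) w) i

/-- The scalar `eta 1 (f 1) ⋯ eta d (f d) (1) ∈ ℂ`. -/
noncomputable def apply (E : L1Chain d μ) (f : Fin d → Lp ℂ 1 μ) : ℂ :=
  E.e0 (E.rightVec f 0)

end L1Chain

section Aux

variable {H : Type*} [NormedAddCommGroup H] [InnerProductSpace ℂ H]

lemma aux_span_closure_eq_top (e : H ≃ₗᵢ[ℂ] ℂ) {s : Set H} {v : H} (hv : v ∈ s)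
    (hv0 : v ≠ 0) : (Submodule.span ℂ s).topologicalClosure = ⊤ := by
  have hev : e v ≠ 0 := by
    intro h
    exact hv0 (e.injective (by simpa using h))
  have hspan : Submodule.span ℂ s = ⊤ := by
    rw [eq_top_iff]
    rintro u -
    have hu : u = (e u / e v) • v := by
      apply e.injective
      rw [e.map_smul, smul_eq_mul]
      field_simp
    rw [hu]
    exact Submodule.smul_mem _ _ (Submodule.subset_span hv)
  rw [hspan]
  exact eq_top_iff.2 (Submodule.le_topologicalClosure ⊤)

lemma aux_mem_orthogonal_span {s : Set H} {w : H} (h : ∀ u ∈ s, ⟪u, w⟫ = 0) :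
    w ∈ (Submodule.span ℂ s)ᗮ := by
  rw [Submodule.mem_orthogonal]
  intro u hu
  induction hu using Submodule.span_induction with
  | mem u hu => exact h u hu
  | zero => simp
  | add u v _ _ hu hv => rw [inner_add_left, hu, hv, add_zero]
  | smul c u _ hu => rw [inner_smul_left, hu, mul_zero]

lemma aux_continuous_inner_of_dense {α : Type*} [TopologicalSpace α] [CompleteSpace H]
    (T : α → H) (C : ℝ) (hC : ∀ a, ‖T a‖ ≤ C) (p : Submodule ℂ H)
    (hp : p.topologicalClosure = ⊤)
    (hcont : ∀ w ∈ p, Continuous fun a => ⟪T a, w⟫) (w : H) :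
    Continuous fun a => ⟪T a, w⟫ := by
  have hw : w ∈ closure (p : Set H) := by
    have : (p.topologicalClosure : Set H) = closure (p : Set H) := rfl
    rw [← this, hp]; trivial
  obtain ⟨u, hu, hlim⟩ := mem_closure_iff_seq_limit.1 hw
  have hdist : Tendsto (fun n => C * ‖w - u n‖) atTop (𝓝 0) := by
    have : Tendsto (fun n => ‖w - u n‖) atTop (𝓝 0) := by
      have := hlim.const_sub w
      simpa using this.norm
    simpa using this.const_mul C
  have htu : TendstoUniformly (fun n a => ⟪T a, u n⟫) (fun a => ⟪T a, w⟫) atTop := by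
    rw [Metric.tendstoUniformly_iff]
    intro ε hε
    filter_upwards [hdist.eventually (gt_mem_nhds hε)] with n hn a
    calc dist (⟪T a, w⟫) (⟪T a, u n⟫) = ‖⟪T a, w - u n⟫‖ := by
          rw [dist_eq_norm, ← inner_sub_right]
      _ ≤ ‖T a‖ * ‖w - u n‖ := norm_inner_le_norm _ _
      _ ≤ C * ‖w - u n‖ := mul_le_mul_of_nonneg_right (hC a) (norm_nonneg _)
      _ < ε := hn
  exact htu.continuous (Frequently.of_forall fun n => hcont _ (hu n))

end Aux

lemma aux_prod_ofFn {G : Type*} [Monoid G] {n : ℕ} (hn : 0 < n) (g : G) :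
    (List.ofFn (fun j : Fin n => if (j : ℕ) = 0 then g else 1)).prod = g := by
  cases n with
  | zero => omega
  | succ n =>
    rw [List.ofFn_succ]
    simp [List.prod_replicate]

namespace Factorization

variable {d : ℕ} {G : Type*} [Group G] {φ : G → ℂ} (F : Factorization.{u} d G φ)

lemma rightVec_last (x : Fin d → G) : F.rightVec x (Fin.last d) = F.ed.symm 1 :=
  Fin.reverseInduction_last ..

lemma rightVec_castSucc (x : Fin d → G) (i : Fin d) :
    F.rightVec x i.castSucc = F.xi i (x i) (F.rightVec x i.succ) :=
  Fin.reverseInduction_castSucc ..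

lemma leftVec_zero (x : Fin d → G) : F.leftVec x 0 = F.e0.symm 1 := rfl

lemma leftVec_succ (x : Fin d → G) (i : Fin d) :
    F.leftVec x i.succ =
      ContinuousLinearMap.adjoint (F.xi i (x i)) (F.leftVec x i.castSucc) := rfl

lemma factor' (x : Fin d → G) : φ (List.ofFn x).prod = F.e0 (F.rightVec x 0) := F.factor x

lemma rightVec_congr {x y : Fin d → G} (i : Fin (d + 1))
    (h : ∀ j : Fin d, i ≤ j.castSucc → x j = y j) : F.rightVec x i = F.rightVec y i := by
  induction i using Fin.reverseInduction with
  | last => rw [rightVec_last, rightVec_last]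
  | cast i ih =>
    rw [rightVec_castSucc, rightVec_castSucc, h i le_rfl,
      ih fun j hj => h j ((Fin.castSucc_lt_succ : i.castSucc < i.succ).le.trans hj)]

lemma leftVec_congr {x y : Fin d → G} : ∀ (i : Fin (d + 1)),
    (∀ j : Fin d, j.castSucc < i → x j = y j) → F.leftVec x i = F.leftVec y i := by
  intro i
  induction i using Fin.induction with
  | zero => intro _; rfl
  | succ i ih =>
    intro h
    rw [leftVec_succ, leftVec_succ, h i (Fin.castSucc_lt_succ : i.castSucc < i.succ),
      ih fun j hj => h j (hj.trans (Fin.castSucc_lt_succ : i.castSucc < i.succ))]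

lemma inner_rightVec_leftVec (x : Fin d → G) : ∀ i : Fin (d + 1),
    ⟪F.rightVec x i, F.leftVec x i⟫ = conj (φ (List.ofFn x).prod) := by
  intro i
  induction i using Fin.induction with
  | zero =>
    rw [F.factor' x, leftVec_zero, ← F.e0.inner_map_map (F.rightVec x 0) (F.e0.symm 1),
      F.e0.apply_symm_apply, RCLike.inner_apply, one_mul]
  | succ i ih =>
    rw [leftVec_succ, ContinuousLinearMap.adjoint_inner_right, ← rightVec_castSucc]
    exact ih

end Factorization


/-- The splice of two tuples at position `i`. -/
def auxSplice {d : ℕ} {G : Type*} (x y : Fin d → G) (i : Fin (d + 1)) : Fin d → G :=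
  fun j => if j.castSucc < i then y j else x j

namespace Factorization

variable {d : ℕ} {G : Type*} [Group G] {φ : G → ℂ} (F : Factorization.{u} d G φ)

lemma inner_rightVec_leftVec' (x y : Fin d → G) (i : Fin (d + 1)) :
    ⟪F.rightVec x i, F.leftVec y i⟫ = conj (φ (List.ofFn (auxSplice x y i)).prod) := by
  have h1 : F.rightVec (auxSplice x y i) i = F.rightVec x i :=
    F.rightVec_congr i fun j hj => if_neg (not_lt.2 hj)
  have h2 : F.leftVec (auxSplice x y i) i = F.leftVec y i :=
    F.leftVec_congr i fun j hj => if_pos hj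
  rw [← h1, ← h2, F.inner_rightVec_leftVec]

lemma norm_rightVec_le : ∀ i : Fin (d + 1), ∃ C : ℝ, 0 ≤ C ∧ ∀ x, ‖F.rightVec x i‖ ≤ C := by
  intro i
  induction i using Fin.reverseInduction with
  | last => exact ⟨1, zero_le_one, fun x => by rw [F.rightVec_last]; simp⟩
  | cast i ih =>
    obtain ⟨C, hC0, hC⟩ := ih
    obtain ⟨M, hM⟩ := F.bdd i
    refine ⟨max M 0 * C, mul_nonneg (le_max_right _ _) hC0, fun x => ?_⟩
    rw [F.rightVec_castSucc]
    calc ‖F.xi i (x i) (F.rightVec x i.succ)‖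
        ≤ ‖F.xi i (x i)‖ * ‖F.rightVec x i.succ‖ := ContinuousLinearMap.le_opNorm _ _
      _ ≤ max M 0 * C :=
          mul_le_mul ((hM _).trans (le_max_left _ _)) (hC _) (norm_nonneg _) (le_max_right _ _)

variable [TopologicalSpace G] [IsTopologicalGroup G]

lemma continuous_prod_splice (y : Fin d → G) (i : Fin (d + 1)) :
    Continuous fun x : Fin d → G => (List.ofFn (auxSplice x y i)).prod := by
  have h : ∀ x : Fin d → G, List.ofFn (auxSplice x y i) =
      (List.finRange d).map fun j => auxSplice x y i j := fun _ => List.ofFn_eq_map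
  simp only [h]
  refine continuous_list_prod _ fun j _ => ?_
  by_cases hj : j.castSucc < i
  · simp only [auxSplice, if_pos hj]; exact continuous_const
  · simp only [auxSplice, if_neg hj]; exact continuous_apply j

lemma continuous_inner_rightVec_span (hφc : Continuous φ) (i : Fin (d + 1)) :
    ∀ w ∈ Submodule.span ℂ (Set.range fun y : Fin d → G => F.leftVec y i),
      Continuous fun x : Fin d → G => ⟪F.rightVec x i, w⟫ := by
  intro w hw
  induction hw using Submodule.span_induction with
  | mem w hw =>
    obtain ⟨y, rfl⟩ := hw
    simp only [F.inner_rightVec_leftVec', starRingEnd_apply]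
    exact continuous_star.comp (hφc.comp (continuous_prod_splice y i))
  | zero => simp only [inner_zero_right]; exact continuous_const
  | add w₁ w₂ _ _ h1 h2 => simp only [inner_add_right]; exact h1.add h2
  | smul c w _ h => simp only [inner_smul_right]; exact continuous_const.mul h

lemma continuous_inner_rightVec (hφc : Continuous φ) (i : Fin (d + 1))
    (hleft : (Submodule.span ℂ
      (Set.range fun y : Fin d → G => F.leftVec y i)).topologicalClosure = ⊤)
    (w : F.H i) : Continuous fun x : Fin d → G => ⟪F.rightVec x i, w⟫ := by
  obtain ⟨C, _, hC⟩ := F.norm_rightVec_le i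
  exact aux_continuous_inner_of_dense _ C hC _ hleft (F.continuous_inner_rightVec_span hφc i) w

lemma continuous_inner_xi_span (hφc : Continuous φ) (i : Fin d)
    (hleft : (Submodule.span ℂ
      (Set.range fun y : Fin d → G => F.leftVec y i.castSucc)).topologicalClosure = ⊤)
    (w : F.H i.castSucc) :
    ∀ v ∈ Submodule.span ℂ (Set.range fun x : Fin d → G => F.rightVec x i.succ),
      Continuous fun z : G => ⟪F.xi i z v, w⟫ := by
  intro v hv
  induction hv using Submodule.span_induction with
  | mem v hv =>
    obtain ⟨x, rfl⟩ := hv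
    have key : ∀ z : G, F.xi i z (F.rightVec x i.succ) =
        F.rightVec (Function.update x i z) i.castSucc := by
      intro z
      have h2 : F.rightVec (Function.update x i z) i.succ = F.rightVec x i.succ :=
        F.rightVec_congr i.succ fun j hj => Function.update_of_ne
          (by rintro rfl; simp [Fin.le_def] at hj) z x
      rw [F.rightVec_castSucc, h2, Function.update_self]
    simp only [key]
    have hu : Continuous fun z : G => Function.update x i z := by
      refine continuous_pi fun j => ?_
      by_cases hj : j = i
      · subst hj; simpa only [Function.update_self] using continuous_id'
      · simpa only [Function.update_of_ne hj] using continuous_const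
    exact (F.continuous_inner_rightVec hφc i.castSucc hleft w).comp hu
  | zero => simp only [map_zero, inner_zero_left]; exact continuous_const
  | add v₁ v₂ _ _ h1 h2 => simp only [map_add, inner_add_left]; exact h1.add h2
  | smul c v _ h => simp only [_root_.map_smul, inner_smul_left]; exact continuous_const.mul h

lemma continuous_inner_xi (hφc : Continuous φ) (i : Fin d)
    (hleft : (Submodule.span ℂ
      (Set.range fun y : Fin d → G => F.leftVec y i.castSucc)).topologicalClosure = ⊤)
    (hright : (Submodule.span ℂ
      (Set.range fun x : Fin d → G => F.rightVec x i.succ)).topologicalClosure = ⊤)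
    (v : F.H i.succ) (w : F.H i.castSucc) :
    Continuous fun z : G => ⟪F.xi i z v, w⟫ := by
  obtain ⟨M, hM⟩ := F.bdd i
  have hT : ∀ z : G, ‖ContinuousLinearMap.adjoint (F.xi i z) w‖ ≤ max M 0 * ‖w‖ := by
    intro z
    calc ‖ContinuousLinearMap.adjoint (F.xi i z) w‖
        ≤ ‖ContinuousLinearMap.adjoint (F.xi i z)‖ * ‖w‖ := ContinuousLinearMap.le_opNorm _ _
      _ ≤ max M 0 * ‖w‖ := by
          rw [LinearIsometryEquiv.norm_map]
          exact mul_le_mul_of_nonneg_right ((hM _).trans (le_max_left _ _)) (norm_nonneg _)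
  have hmain := aux_continuous_inner_of_dense
      (fun z : G => ContinuousLinearMap.adjoint (F.xi i z) w) (max M 0 * ‖w‖) hT _ hright
      (fun v' hv' => by
        have hc := F.continuous_inner_xi_span hφc i hleft w v' hv'
        have heq' : (fun z : G => ⟪ContinuousLinearMap.adjoint (F.xi i z) w, v'⟫) =
            fun z : G => conj ⟪F.xi i z v', w⟫ := by
          funext z
          rw [ContinuousLinearMap.adjoint_inner_left, ← inner_conj_symm]
        rw [heq']
        simpa only [starRingEnd_apply, Function.comp_def] using continuous_star.comp hc) v
  have heq : (fun z : G => ⟪F.xi i z v, w⟫) =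
      fun z : G => conj ⟪ContinuousLinearMap.adjoint (F.xi i z) w, v⟫ := by
    funext z
    rw [ContinuousLinearMap.adjoint_inner_left, inner_conj_symm]
  rw [heq]
  simp only [starRingEnd_apply]
  exact continuous_star.comp hmain

end Factorization


/-- For a nonzero continuous `M_d`-multiplier of a second countable
locally compact group, a factorization whose sets `Aᵢ` and `Bᵢ` are total consists of
weak-operator-topology continuous maps between separable Hilbert spaces. -/
theorem factorization_wotContinuous_of_total
    {G : Type*} [Group G] [TopologicalSpace G] [IsTopologicalGroup G]
    [LocallyCompactSpace G] [SecondCountableTopology G]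
    (d : ℕ) (hd : 2 ≤ d)
    (φ : G → ℂ) (hφ : IsMdMultiplier d φ) (hφne : φ ≠ 0)
    (F : Factorization.{u} d G φ)
    (htot : ∀ i : Fin (d + 1), i ≠ 0 → i ≠ Fin.last d →
      (Submodule.span ℂ
          (Set.range fun x : Fin d → G => F.rightVec x i)).topologicalClosure = ⊤ ∧
      (Submodule.span ℂ
          (Set.range fun x : Fin d → G => F.leftVec x i)).topologicalClosure = ⊤) :
    (∀ (i : Fin d) (v : F.H i.succ) (w : F.H i.castSucc),
        Continuous fun x : G => ⟪F.xi i x v, w⟫) ∧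
    ∀ i : Fin (d + 1), TopologicalSpace.SeparableSpace (F.H i) := by
  obtain ⟨hφc, -, -⟩ := hφ
  have hgex : ∃ g : G, φ g ≠ 0 := by
    by_contra h
    push_neg at h
    exact hφne (funext fun g => h g)
  obtain ⟨g, hg⟩ := hgex
  have hd0 : 0 < d := by omega
  set xx : Fin d → G := fun j => if (j : ℕ) = 0 then g else 1 with hxx
  have hprod : (List.ofFn xx).prod = g := aux_prod_ofFn hd0 g
  have hright : ∀ i : Fin (d + 1),
      (Submodule.span ℂ
        (Set.range fun x : Fin d → G => F.rightVec x i)).topologicalClosure = ⊤ := by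
    intro i
    by_cases h0 : i = 0
    · subst h0
      refine aux_span_closure_eq_top F.e0 (Set.mem_range_self xx) ?_
      intro hv
      apply hg
      rw [← hprod, F.factor', hv, map_zero]
    by_cases hl : i = Fin.last d
    · subst hl
      refine aux_span_closure_eq_top F.ed (Set.mem_range_self xx) ?_
      rw [F.rightVec_last]
      intro hv
      have h := congrArg F.ed hv
      rw [F.ed.apply_symm_apply, map_zero] at h
      exact one_ne_zero h
    · exact (htot i h0 hl).1
  have hleft : ∀ i : Fin (d + 1),
      (Submodule.span ℂ
        (Set.range fun x : Fin d → G => F.leftVec x i)).topologicalClosure = ⊤ := by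
    intro i
    by_cases h0 : i = 0
    · subst h0
      refine aux_span_closure_eq_top F.e0 (Set.mem_range_self xx) ?_
      rw [F.leftVec_zero]
      intro hv
      have h := congrArg F.e0 hv
      rw [F.e0.apply_symm_apply, map_zero] at h
      exact one_ne_zero h
    by_cases hl : i = Fin.last d
    · subst hl
      refine aux_span_closure_eq_top F.ed (Set.mem_range_self xx) ?_
      intro hv
      have h := F.inner_rightVec_leftVec xx (Fin.last d)
      rw [hv, inner_zero_right, hprod] at h
      exact hg (by simpa using h.symm)
    · exact (htot i h0 hl).2
  refine ⟨fun i v w => F.continuous_inner_xi hφc i (hleft i.castSucc) (hright i.succ) v w,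
    fun i => ?_⟩
  obtain ⟨D, hDcount, hDdense⟩ := TopologicalSpace.exists_countable_dense (Fin d → G)
  set S : Set (F.H i) := (fun x : Fin d → G => F.rightVec x i) '' D with hS
  have hSc : S.Countable := hDcount.image _
  have hKtop : (Submodule.span ℂ S).topologicalClosure = ⊤ := by
    rw [Submodule.topologicalClosure_eq_top_iff, Submodule.eq_bot_iff]
    intro w hw
    have hwzero : ∀ x ∈ D, ⟪F.rightVec x i, w⟫ = 0 := fun x hx =>
      (Submodule.mem_orthogonal _ w).1 hw _ (Submodule.subset_span ⟨x, hx, rfl⟩)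
    have hcont : Continuous fun x : Fin d → G => ⟪F.rightVec x i, w⟫ :=
      F.continuous_inner_rightVec hφc i (hleft i) w
    have hfun : (fun x : Fin d → G => ⟪F.rightVec x i, w⟫) = fun _ => 0 :=
      Continuous.ext_on hDdense hcont continuous_const hwzero
    have hw' : w ∈ (Submodule.span ℂ
        (Set.range fun x : Fin d → G => F.rightVec x i))ᗮ := by
      refine aux_mem_orthogonal_span ?_
      rintro u ⟨x, rfl⟩
      exact congrFun hfun x
    rw [Submodule.topologicalClosure_eq_top_iff.1 (hright i)] at hw'
    exact (Submodule.mem_bot ℂ).1 hw'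
  have hsep : TopologicalSpace.IsSeparable (Submodule.span ℂ S : Set (F.H i)) :=
    hSc.isSeparable.span
  have hclos : closure ((Submodule.span ℂ S : Submodule ℂ (F.H i)) : Set (F.H i)) =
      Set.univ := by
    have h := congrArg (fun K : Submodule ℂ (F.H i) => (K : Set (F.H i))) hKtop
    simpa [Submodule.topologicalClosure_coe] using h
  rw [← TopologicalSpace.isSeparable_univ_iff, ← hclos]
  exact hsep.closure
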